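/- Let p, q, r ≥ 0 be real numbers and let α, β, γ be real numbers with β ≥ 0, γ ≥ 0, α = β + γ and α ≤ π. Then p + q + r ≥ 2√(qr)·cos α − 2√(pr)·cos β − 2√(pq)·cos γ. -/
import Mathlib


theorem statement3 (p q r α β γ : ℝ) (hp : 0 ≤ p) (hq : 0 ≤ q) (hr : 0 ≤ r)
    (hβ : 0 ≤ β) (hγ : 0 ≤ γ) (h : α = β + γ) (hα : α ≤ Real.pi) :
    p + q + r ≥ 2 * Real.sqrt (q * r) * Real.cos α - 2 * Real.sqrt (p * r) * Real.cos β -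
      2 * Real.sqrt (p * q) * Real.cos γ := by
  set x := Real.sqrt p with hx
  set y := Real.sqrt q with hy
  set z := Real.sqrt r with hz
  have hx0 : 0 ≤ x := Real.sqrt_nonneg p
  have hy0 : 0 ≤ y := Real.sqrt_nonneg q
  have hz0 : 0 ≤ z := Real.sqrt_nonneg r
  have hx2 : x ^ 2 = p := Real.sq_sqrt hp
  have hy2 : y ^ 2 = q := Real.sq_sqrt hq
  have hz2 : z ^ 2 = r := Real.sq_sqrt hr
  have hqr : Real.sqrt (q * r) = y * z := Real.sqrt_mul hq r
  have hpr : Real.sqrt (p * r) = x * z := Real.sqrt_mul hp r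
  have hpq : Real.sqrt (p * q) = x * y := Real.sqrt_mul hp q
  have hca : Real.cos α = Real.cos β * Real.cos γ - Real.sin β * Real.sin γ := by
    rw [h, Real.cos_add]
  have hsb : Real.sin β ^ 2 + Real.cos β ^ 2 = 1 := Real.sin_sq_add_cos_sq β
  have hsg : Real.sin γ ^ 2 + Real.cos γ ^ 2 = 1 := Real.sin_sq_add_cos_sq γ
  rw [hqr, hpr, hpq, ← hx2, ← hy2, ← hz2]
  rcases le_or_gt (Real.cos α) 0 with hc | hc
  · nlinarith [sq_nonneg (x + y * Real.cos γ + z * Real.cos β),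
      sq_nonneg (y * Real.sin γ - z * Real.sin β), mul_nonneg hy0 hz0, hca,
      mul_nonpos_of_nonneg_of_nonpos (mul_nonneg hy0 hz0) hc]
  · -- cos α > 0, with 0 ≤ α ≤ π forces α ≤ π/2, hence β, γ ∈ [0, π/2]
    have hα2 : α ≤ Real.pi / 2 := by
      by_contra hcon
      push_neg at hcon
      have : Real.cos α ≤ 0 := by
        apply Real.cos_nonpos_of_pi_div_two_le_of_le (le_of_lt hcon)
        linarith [Real.pi_pos]
      linarith
    have hcb : 0 ≤ Real.cos β := Real.cos_nonneg_of_mem_Icc ⟨by linarith [Real.pi_pos], by linarith⟩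
    have hcg : 0 ≤ Real.cos γ := Real.cos_nonneg_of_mem_Icc ⟨by linarith [Real.pi_pos], by linarith⟩
    have hca1 : Real.cos α ≤ 1 := Real.cos_le_one α
    nlinarith [sq_nonneg (y - z), sq_nonneg x, mul_nonneg hy0 hz0,
      mul_nonneg (mul_nonneg hx0 hy0) hcg, mul_nonneg (mul_nonneg hx0 hz0) hcb]
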